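/- arXiv:1806.00684 — 2 statements merged into one kernel-verified Lean document; each statement's English description precedes it below -/
import Mathlib

section
/- Fix n ≥ 1 and encode the faces of the n-cube as functions F : {1,…,n} → {0,1,−}. For such F set dim F := #{i : F(i) = −}, z(F) := #{i : F(i) = 0}, p(F) := #{(i,j) : i < j, F(i) = 0, F(j) = −}, and n(F) := p(F) + z(F). Let F be a face, S := {i : F(i) = −}, and let S′ ⊆ S. Define faces F′ and F″ by: F′(i) = 0 for i ∈ S′ and F′(i) = F(i) otherwise; F″(i) = 1 for i ∈ S∖S′ and F″(i) = F(i) otherwise. Let v : S → {0,1} be the indicator function of S∖S′ (with S ordered by the index order), and set ∗(F′,F) := #{j ∈ S : v(j) = 1} + #{(i,j) ∈ S×S : i < j, v(i) = 0, v(j) = 1}. Then n(F′) + n(F″) + ∗(F′,F) ≡ p(F) + dim F (mod 2); in particular this sum's parity is independent of the choice of S′. -/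
/-!
Faces of the `n`-cube are encoded as functions `F : Fin n → Fin 3`, where the value
`0` stands for the symbol `0`, the value `1` for the symbol `1`, and the value `2` for
the symbol `-` (a varying coordinate).
-/

/-- `dim F`: the number of `-` entries of a face. -/
def faceDim {n : ℕ} (F : Fin n → Fin 3) : ℕ :=
  (Finset.univ.filter fun i => F i = 2).card

/-- `z F`: the number of `0` entries of a face. -/
def faceZeros {n : ℕ} (F : Fin n → Fin 3) : ℕ :=
  (Finset.univ.filter fun i => F i = 0).card

/-- `p F`: the number of pairs `i < j` with `F i = 0` and `F j = -`. -/
def facePairs {n : ℕ} (F : Fin n → Fin 3) : ℕ :=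
  (Finset.univ.filter fun p : Fin n × Fin n => p.1 < p.2 ∧ F p.1 = 0 ∧ F p.2 = 2).card

/-- `n F := p F + z F`. -/
def faceSign {n : ℕ} (F : Fin n → Fin 3) : ℕ := facePairs F + faceZeros F

/-- **Sign identity for cubes of chain complexes.**
Let `F` be a face of the `n`-cube, `S = {i : F i = -}`, and `S' ⊆ S`.  Let `F'` be obtained
from `F` by setting the entries of `S'` to `0` and `F''` by setting the entries of `S \ S'`
to `1`.  Let `∗(F',F)` be the number of `j ∈ S \ S'` plus the number of pairs `i < j` in `S`
with `i ∈ S'` and `j ∉ S'` (the count of `1`s and of `01`-subtuples in the indicator tuple of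
`S \ S'` inside `S`).  Then
`n(F') + n(F'') + ∗(F',F) ≡ p(F) + dim F (mod 2)`;
in particular the parity of the left hand side does not depend on `S'`. -/
theorem cube_sign_identity (n : ℕ) (hn : 1 ≤ n) (F : Fin n → Fin 3)
    (S' : Finset (Fin n)) (hS' : ∀ i ∈ S', F i = 2) :
    faceSign (fun i => if i ∈ S' then 0 else F i)
      + faceSign (fun i => if F i = 2 ∧ i ∉ S' then 1 else F i)
      + ((Finset.univ.filter fun i => F i = 2 ∧ i ∉ S').card
        + (Finset.univ.filter fun p : Fin n × Fin n =>
            p.1 < p.2 ∧ p.1 ∈ S' ∧ F p.2 = 2 ∧ p.2 ∉ S').card)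
      ≡ facePairs F + faceDim F [MOD 2] := by
  classical
  set F' : Fin n → Fin 3 := fun i => if i ∈ S' then 0 else F i with hF'
  set F'' : Fin n → Fin 3 := fun i => if F i = 2 ∧ i ∉ S' then 1 else F i with hF''
  set A : Finset (Fin n × Fin n) :=
    Finset.univ.filter (fun p => p.1 < p.2 ∧ F p.1 = 0 ∧ F p.2 = 2 ∧ p.2 ∉ S') with hA
  set B : Finset (Fin n × Fin n) :=
    Finset.univ.filter (fun p => p.1 < p.2 ∧ p.1 ∈ S' ∧ F p.2 = 2 ∧ p.2 ∉ S') with hB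
  set C : Finset (Fin n × Fin n) :=
    Finset.univ.filter (fun p => p.1 < p.2 ∧ F p.1 = 0 ∧ F p.2 = 2 ∧ p.2 ∈ S') with hC
  -- F' pointwise facts
  have hF'0 : ∀ i, F' i = 0 ↔ (F i = 0 ∨ i ∈ S') := by
    intro i
    by_cases h : i ∈ S' <;> simp [hF', h]
  have hF'2 : ∀ i, F' i = 2 ↔ (F i = 2 ∧ i ∉ S') := by
    intro i
    by_cases h : i ∈ S' <;> simp [hF', h]
  have hF''0 : ∀ i, F'' i = 0 ↔ F i = 0 := by
    intro i
    by_cases h : F i = 2 ∧ i ∉ S'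
    · simp only [hF'', if_pos h]
      constructor
      · intro h2; exact absurd h2 (by decide)
      · intro h2; rw [h2] at h; exact absurd h.1 (by decide)
    · simp only [hF'', if_neg h]
  have hF''2 : ∀ i, F'' i = 2 ↔ (F i = 2 ∧ i ∈ S') := by
    intro i
    by_cases h : F i = 2 ∧ i ∉ S'
    · simp only [hF'', if_pos h]
      constructor
      · intro h2; exact absurd h2 (by decide)
      · rintro ⟨_, h3⟩; exact absurd h3 h.2
    · simp only [hF'', if_neg h]
      constructor
      · intro h2
        refine ⟨h2, ?_⟩
        by_contra h3
        exact h ⟨h2, h3⟩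
      · exact fun h2 => h2.1
  -- counts
  have h1 : faceZeros F' = faceZeros F + S'.card := by
    unfold faceZeros
    have e : (Finset.univ.filter fun i => F' i = 0)
        = (Finset.univ.filter fun i => F i = 0) ∪ S' := by
      ext i
      simp [hF'0 i]
    rw [e, Finset.card_union_of_disjoint]
    rw [Finset.disjoint_left]
    intro i hi hi'
    have := hS' i hi'
    simp only [Finset.mem_filter] at hi
    rw [hi.2] at this
    exact absurd this (by decide)
  have h3 : faceZeros F'' = faceZeros F := by
    unfold faceZeros
    congr 1
    ext i
    simp [hF''0 i]
  have h2 : facePairs F' = A.card + B.card := by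
    unfold facePairs
    have e : (Finset.univ.filter fun p : Fin n × Fin n =>
        p.1 < p.2 ∧ F' p.1 = 0 ∧ F' p.2 = 2) = A ∪ B := by
      ext p
      simp only [hA, hB, Finset.mem_union, Finset.mem_filter, Finset.mem_univ, true_and,
        hF'0, hF'2]
      tauto
    rw [e, Finset.card_union_of_disjoint]
    rw [Finset.disjoint_left]
    intro p hp hp'
    simp only [hA, hB, Finset.mem_filter, Finset.mem_univ, true_and] at hp hp'
    have := hS' p.1 hp'.2.1
    rw [hp.2.1] at this
    exact absurd this (by decide)
  have h4 : facePairs F'' = C.card := by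
    unfold facePairs
    congr 1
    ext p
    simp only [hC, Finset.mem_filter, Finset.mem_univ, true_and, hF''0, hF''2]
  have h5 : faceDim F = (Finset.univ.filter fun i => F i = 2 ∧ i ∉ S').card + S'.card := by
    unfold faceDim
    have e : (Finset.univ.filter fun i => F i = 2)
        = (Finset.univ.filter fun i => F i = 2 ∧ i ∉ S') ∪ S' := by
      ext i
      by_cases h : i ∈ S' <;> simp [h, hS' i]
    rw [e, Finset.card_union_of_disjoint]
    rw [Finset.disjoint_left]
    intro i hi hi'
    simp only [Finset.mem_filter] at hi
    exact hi.2.2 hi'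
  have h6 : facePairs F = A.card + C.card := by
    unfold facePairs
    have e : (Finset.univ.filter fun p : Fin n × Fin n =>
        p.1 < p.2 ∧ F p.1 = 0 ∧ F p.2 = 2) = A ∪ C := by
      ext p
      simp only [hA, hC, Finset.mem_union, Finset.mem_filter, Finset.mem_univ, true_and]
      tauto
    rw [e, Finset.card_union_of_disjoint]
    rw [Finset.disjoint_left]
    intro p hp hp'
    simp only [hA, hC, Finset.mem_filter, Finset.mem_univ, true_and] at hp hp'
    exact hp.2.2.2 hp'.2.2.2
  show _ % 2 = _ % 2
  unfold faceSign
  rw [h1, h2, h3, h4, h5, h6]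
  omega
end

section
/- Let X be a compact smooth manifold without boundary (Hausdorff, second countable, modeled on a finite-dimensional real vector space) and let A ⊆ X be a compact subset. Let H₁ ≤ H₂ ≤ ⋯ be a pointwise nondecreasing sequence of smooth functions X → ℝ with H_i(x) < 0 for all x ∈ A and all i. Then the family (H_i) is cofinal in the set C^∞_{A⊂X} of smooth functions X → ℝ that are negative on A, partially ordered by pointwise ≤ (i.e., for every smooth f : X → ℝ with f < 0 on A there exists i with f(x) ≤ H_i(x) for all x ∈ X), if and only if H_i(x) → 0 as i → ∞ for every x ∈ A and H_i(x) → +∞ as i → ∞ for every x ∈ X ∖ A. -/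
open scoped Manifold

/-- **Cofinality criterion for monotone families of Hamiltonians.**
Let `X` be a closed (compact, boundaryless) smooth manifold and `A ⊆ X` a compact subset.
Let `H 0 ≤ H 1 ≤ ⋯` be a pointwise nondecreasing sequence of smooth functions `X → ℝ`,
each negative on `A`.  Then the family `(H i)` is cofinal in
`C^∞_{A ⊂ X} = {f smooth | f < 0 on A}` (ordered by pointwise `≤`) if and only if
`H i x → 0` for every `x ∈ A` and `H i x → ∞` for every `x ∉ A`, as `i → ∞`. -/
theorem cofinal_iff_tendsto
    {E : Type*} [NormedAddCommGroup E] [NormedSpace ℝ E] [FiniteDimensional ℝ E]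
    {X : Type*} [TopologicalSpace X] [T2Space X] [SecondCountableTopology X]
    [ChartedSpace E X] [IsManifold (modelWithCornersSelf ℝ E) (⊤ : ℕ∞) X]
    [CompactSpace X]
    (A : Set X) (hA : IsCompact A)
    (H : ℕ → X → ℝ)
    (hsm : ∀ i, ContMDiff (modelWithCornersSelf ℝ E) (modelWithCornersSelf ℝ ℝ) (⊤ : ℕ∞) (H i))
    (hmono : ∀ i x, H i x ≤ H (i + 1) x)
    (hneg : ∀ i, ∀ x ∈ A, H i x < 0) :
    (∀ f : X → ℝ, ContMDiff (modelWithCornersSelf ℝ E) (modelWithCornersSelf ℝ ℝ) (⊤ : ℕ∞) f →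
        (∀ x ∈ A, f x < 0) → ∃ i, ∀ x, f x ≤ H i x) ↔
      ((∀ x ∈ A, Filter.Tendsto (fun i => H i x) Filter.atTop (nhds 0)) ∧
        (∀ x ∉ A, Filter.Tendsto (fun i => H i x) Filter.atTop Filter.atTop)) := by
  have hm : ∀ x : X, Monotone fun i => H i x := fun x =>
    monotone_nat_of_le_succ fun i => hmono i x
  constructor
  · intro hcof
    constructor
    · intro x hx
      rw [Metric.tendsto_atTop]
      intro ε hε
      obtain ⟨N, hN⟩ := hcof (fun _ => -(ε / 2)) contMDiff_const
        (fun _ _ => by linarith)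
      refine ⟨N, fun n hn => ?_⟩
      have h1 : -(ε / 2) ≤ H n x := (hN x).trans (hm x hn)
      have h2 : H n x < 0 := hneg n x hx
      rw [Real.dist_eq]
      rw [abs_sub_lt_iff]
      constructor <;> linarith
    · intro x hx
      rw [Filter.tendsto_atTop]
      intro M
      -- smooth function vanishing on A, equal to 1 at x
      obtain ⟨g, hg0, hg1, hg01⟩ :=
        exists_contMDiffMap_zero_one_of_isClosed (modelWithCornersSelf ℝ E) (n := (⊤ : ℕ∞)) hA.isClosed
          (isClosed_singleton (x := x)) (Set.disjoint_singleton_right.2 hx)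
      set f : X → ℝ := fun y => (|M| + 1) * g y - 1 with hf
      have hfs : ContMDiff (modelWithCornersSelf ℝ E) (modelWithCornersSelf ℝ ℝ) (⊤ : ℕ∞) f := by
        exact (contMDiff_const.mul g.contMDiff).sub contMDiff_const
      have hfneg : ∀ y ∈ A, f y < 0 := by
        intro y hy
        simp [hf, hg0 hy]
      obtain ⟨N, hN⟩ := hcof f hfs hfneg
      have hfx : (M : ℝ) ≤ f x := by
        have : g x = 1 := hg1 rfl
        simp only [hf, this, mul_one]
        have := abs_nonneg M
        have := le_abs_self M
        linarith
      refine Filter.eventually_atTop.2 ⟨N, fun n hn => ?_⟩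
      exact hfx.trans ((hN x).trans (hm x hn))
  · rintro ⟨hA0, hout⟩ f hf hfneg
    set U : ℕ → Set X := fun i => {x | f x < H i x} with hU
    have hUopen : ∀ i, IsOpen (U i) := fun i =>
      isOpen_lt hf.continuous (hsm i).continuous
    have hcover : (Set.univ : Set X) ⊆ ⋃ i, U i := by
      intro x _
      rcases Classical.em (x ∈ A) with hx | hx
      · obtain ⟨i, hi⟩ := ((hA0 x hx).eventually
          (eventually_gt_nhds (hfneg x hx))).exists
        exact Set.mem_iUnion.2 ⟨i, hi⟩
      · obtain ⟨i, hi⟩ := ((hout x hx).eventually_gt_atTop (f x)).exists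
        exact Set.mem_iUnion.2 ⟨i, hi⟩
    obtain ⟨s, hs⟩ := isCompact_univ.elim_finite_subcover U hUopen hcover
    refine ⟨s.sup id, fun x => ?_⟩
    obtain ⟨i, hi, hxi⟩ := Set.mem_iUnion₂.1 (hs (Set.mem_univ x))
    exact le_of_lt (lt_of_lt_of_le hxi (hm x (Finset.le_sup (f := id) hi)))
end
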